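/- Let J be an ideal of ℝ[x], f̂ ∈ ℝ[x], ℓ ≥ 1 an integer, and σ* ∈ ℝ[x], with f̂^{2ℓ} + σ* ∈ J. For ε > 0 define φ_ε = −(1/(2ℓ)) ε^{1−2ℓ}(f̂^{2ℓ} + σ*) and θ_ε = ε(1 + f̂/ε + (1/(2ℓ))(f̂/ε)^{2ℓ}) + (1/(2ℓ))ε^{1−2ℓ}σ*. Then f̂ + ε = φ_ε + θ_ε, φ_ε ∈ J, and if σ* is a sum of squares then θ_ε is a nonnegative combination of an SOS polynomial and σ*, using that 1 + t + (1/(2ℓ))t^{2ℓ} is a sum of squares in ℝ[t]. -/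

import Mathlib

open MvPolynomial Finset

lemma Dlem {R : Type*} [CommRing R] (t : R) (l : ℕ) :
    ∑ k ∈ Finset.range l, ∑ j ∈ Finset.range k, ((t^2-1)*t^j) * ((t^2-1)*t^j)
      = t^(2*l) - (l:R)*t^2 + ((l:R) - 1) := by
  induction l with
  | zero => simp
  | succ m ih =>
    rw [Finset.sum_range_succ, ih]
    have h : ∑ j ∈ Finset.range m, ((t^2-1)*t^j) * ((t^2-1)*t^j)
        = (t^2-1)^2 * ∑ j ∈ Finset.range m, (t^2)^j := by
      rw [Finset.mul_sum]
      refine Finset.sum_congr rfl fun j _ => ?_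
      rw [← pow_mul, mul_comm 2 j, pow_mul]; ring
    have hg := geom_sum_mul (t^2) m
    rw [h]
    push_cast
    rw [show 2*(m+1) = 2*m + 2 by ring, pow_add, show t^(2*m) = (t^2)^m by rw [pow_mul]]
    linear_combination (t^2 - 1) * hg

lemma isSumSq_finsum {R ι : Type*} [AddCommMonoid R] [Mul R] (s : Finset ι)
    (F : ι → R) (h : ∀ i ∈ s, IsSumSq (F i)) : IsSumSq (∑ i ∈ s, F i) :=
  Finset.sum_induction F IsSumSq (fun _ _ ha hb => ha.add hb) IsSumSq.zero h

theorem stmt16 (n : ℕ) (J : Ideal (MvPolynomial (Fin n) ℝ))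
    (fh σs : MvPolynomial (Fin n) ℝ)
    (l : ℕ) (hl : 1 ≤ l)
    (hJ : fh ^ (2 * l) + σs ∈ J)
    (ε : ℝ) (hε : 0 < ε)
    (φ θ sos : MvPolynomial (Fin n) ℝ)
    (hφ : φ = - MvPolynomial.C ((1 / (2 * l : ℝ)) * ε ^ (1 - 2 * (l : ℤ)))
                * (fh ^ (2 * l) + σs))
    (hsos : sos = MvPolynomial.C ε *
        (1 + MvPolynomial.C ε⁻¹ * fh
           + MvPolynomial.C (1 / (2 * l : ℝ)) * (MvPolynomial.C ε⁻¹ * fh) ^ (2 * l)))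
    (hθ : θ = sos + MvPolynomial.C ((1 / (2 * l : ℝ)) * ε ^ (1 - 2 * (l : ℤ))) * σs) :
    fh + MvPolynomial.C ε = φ + θ ∧ φ ∈ J ∧
      (IsSumSq σs → IsSumSq sos ∧ 0 ≤ (1 / (2 * l : ℝ)) * ε ^ (1 - 2 * (l : ℤ))) := by
  have hεne : ε ≠ 0 := ne_of_gt hε
  have hlR : (0:ℝ) < (l:ℝ) := by exact_mod_cast hl
  have hlne : ((l:ℝ)) ≠ 0 := ne_of_gt hlR
  -- scalar zpow identity
  have hw2 : ε ^ ((1:ℤ) - 2 * (l:ℤ)) = ε * (ε⁻¹) ^ (2 * l) := by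
    have h1 : (2 * (l:ℤ)) = ((2 * l : ℕ) : ℤ) := by push_cast; ring
    rw [zpow_sub₀ hεne, zpow_one, h1, zpow_natCast, div_eq_mul_inv, ← inv_pow]
  have hAB : (MvPolynomial.C ε : MvPolynomial (Fin n) ℝ) * MvPolynomial.C ε⁻¹ = 1 := by
    rw [← map_mul, mul_inv_cancel₀ hεne, map_one]
  refine ⟨?_, ?_, ?_⟩
  · rw [hφ, hθ, hsos]
    simp only [hw2, map_mul, map_pow]
    linear_combination (-fh) * hAB
  · rw [hφ]
    exact J.mul_mem_left _ hJ
  · intro _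
    constructor
    · -- IsSumSq sos
      set t : MvPolynomial (Fin n) ℝ := MvPolynomial.C ε⁻¹ * fh with ht
      set a : ℝ := Real.sqrt (ε/2) with hadef
      set b : ℝ := Real.sqrt (ε/(2*l)) with hbdef
      have ha' : (MvPolynomial.C a : MvPolynomial (Fin n) ℝ) * MvPolynomial.C a
          = MvPolynomial.C (ε/2) := by
        rw [← map_mul, Real.mul_self_sqrt (by positivity)]
      have hb' : (MvPolynomial.C b : MvPolynomial (Fin n) ℝ) * MvPolynomial.C b
          = MvPolynomial.C (ε/(2*l)) := by
        rw [← map_mul, Real.mul_self_sqrt (by positivity)]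
      have hr2 : (MvPolynomial.C ε : MvPolynomial (Fin n) ℝ)
          = MvPolynomial.C (ε/2) + MvPolynomial.C (ε/2) := by
        rw [← map_add]; norm_num
      have hL : ((l : MvPolynomial (Fin n) ℝ)) = MvPolynomial.C ((l:ℝ)) := by
        simp
      have hr3 : (MvPolynomial.C (ε/2) : MvPolynomial (Fin n) ℝ)
          = MvPolynomial.C (ε/(2*l)) * (l : MvPolynomial (Fin n) ℝ) := by
        rw [hL, ← map_mul]; congr 1; field_simp
      have hr4 : (MvPolynomial.C ε : MvPolynomial (Fin n) ℝ)
          * MvPolynomial.C (1/(2*l:ℝ)) = MvPolynomial.C (ε/(2*l)) := by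
        rw [← map_mul]; congr 1; ring
      have hD := Dlem t l
      have key : sos = (MvPolynomial.C a * (1+t)) * (MvPolynomial.C a * (1+t))
          + (MvPolynomial.C b * MvPolynomial.C b
            + ∑ k ∈ Finset.range l, ∑ j ∈ Finset.range k,
               (MvPolynomial.C b * ((t^2-1)*t^j)) * (MvPolynomial.C b * ((t^2-1)*t^j))) := by
        have hSig : ∑ k ∈ Finset.range l, ∑ j ∈ Finset.range k,
               (MvPolynomial.C b * ((t^2-1)*t^j)) * (MvPolynomial.C b * ((t^2-1)*t^j))
            = (MvPolynomial.C b * MvPolynomial.C b) *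
              ∑ k ∈ Finset.range l, ∑ j ∈ Finset.range k, ((t^2-1)*t^j)*((t^2-1)*t^j) := by
          rw [Finset.mul_sum]
          refine Finset.sum_congr rfl fun k _ => ?_
          rw [Finset.mul_sum]
          exact Finset.sum_congr rfl fun j _ => by ring
        have step1 : (MvPolynomial.C a * (1+t)) * (MvPolynomial.C a * (1+t))
            = MvPolynomial.C (ε/2) * ((1+t)*(1+t)) := by rw [← ha']; ring
        rw [hSig, hD, step1, hb', hsos]
        linear_combination (1 + t) * hr2 + (1 - t^2) * hr3 + t^(2*l) * hr4
      rw [key]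
      refine IsSumSq.sq_add _ (IsSumSq.sq_add _ ?_)
      refine isSumSq_finsum _ _ fun k _ => ?_
      exact IsSumSq.sum_mul_self _ _
    · positivity
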